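/- For all integers n and k with n ≥ k+1, the unsigned Stirling number of the first kind satisfies c(n, n−k) = Σ_{j=0}^{k} c≥2(k+j, j) · C(n, k+j), where C(n,m) denotes the binomial coefficient. -/

import Mathlib

open Equiv Equiv.Perm Finset

/-- Unsigned Stirling numbers of the first kind, defined by the standard recurrence:
`c(0,0) = 1`, `c(n,0) = 0` for `n ≥ 1`, `c(0,k) = 0` for `k ≥ 1`, and
`c(n+1,k+1) = c(n,k) + n * c(n,k+1)`. -/
def stirling1 : ℕ → ℕ → ℕ
  | 0, 0 => 1
  | 0, _ + 1 => 0
  | _ + 1, 0 => 0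
  | n + 1, k + 1 => stirling1 n k + n * stirling1 n (k + 1)

/-- The number of cycles (orbits) of a permutation. -/
noncomputable def cycleCount {n : ℕ} (σ : Equiv.Perm (Fin n)) : ℕ :=
  Nat.card (Quotient (Equiv.Perm.SameCycle.setoid σ))

/-- The associated Stirling number of the first kind `c≥2(n, k)`: the number of
permutations of an `n`-element set with exactly `k` cycles and no fixed points. -/
noncomputable def stirling1Assoc (n k : ℕ) : ℕ :=
  Nat.card {σ : Equiv.Perm (Fin n) // cycleCount σ = k ∧ ∀ x, σ x ≠ x}


variable {α β : Type*}

noncomputable def ccAux (σ : Equiv.Perm α) : ℕ :=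
  Nat.card (Quotient (Equiv.Perm.SameCycle.setoid σ))

/-- permCongr as MulEquiv -/
def permCongrMul (e : α ≃ β) : Equiv.Perm α ≃* Equiv.Perm β :=
  { e.permCongr with map_mul' := fun f g => by ext x; simp [Equiv.permCongr_apply] }

lemma permCongrMul_apply (e : α ≃ β) (f : Equiv.Perm α) :
    permCongrMul e f = e.permCongr f := rfl

lemma permCongr_zpow_apply (e : α ≃ β) (f : Equiv.Perm α) (i : ℤ) (x : α) :
    ((e.permCongr f) ^ i) (e x) = e ((f ^ i) x) := by
  rw [← permCongrMul_apply, ← map_zpow, permCongrMul_apply, Equiv.permCongr_apply]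
  simp

lemma ccAux_permCongr (e : α ≃ β) (f : Equiv.Perm α) : ccAux (e.permCongr f) = ccAux f := by
  refine (Nat.card_congr (Quotient.congr e fun a b => ?_)).symm
  constructor
  · rintro ⟨i, hi⟩
    exact ⟨i, by rw [permCongr_zpow_apply, hi]⟩
  · rintro ⟨i, hi⟩
    exact ⟨i, e.injective (by rw [← permCongr_zpow_apply e f i a, hi])⟩

lemma ccAux_eq [Fintype α] [DecidableEq α] (σ : Equiv.Perm α) :
    ccAux σ = Multiset.card σ.cycleType + (Fintype.card α - σ.support.card) := by
  classical
  have key : Quotient (Equiv.Perm.SameCycle.setoid σ) ≃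
      ({c // c ∈ σ.cycleFactorsFinset} ⊕ {x : α // x ∉ σ.support}) := by
    refine Equiv.ofBijective (fun q => Quotient.liftOn q (fun x =>
      if h : x ∈ σ.support then
        Sum.inl ⟨σ.cycleOf x, cycleOf_mem_cycleFactorsFinset_iff.2 h⟩
      else Sum.inr ⟨x, h⟩) ?_) ⟨?_, ?_⟩
    · intro a b hab
      by_cases ha : a ∈ σ.support
      · have hb : b ∈ σ.support := (hab.mem_support_iff).1 ha
        simp only [dif_pos ha, dif_pos hb, Sum.inl.injEq, Subtype.mk.injEq]
        exact hab.cycleOf_eq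
      · have hb : b ∉ σ.support := fun hb => ha ((hab.mem_support_iff).2 hb)
        have hh : a = b := by
          obtain ⟨i, hi⟩ := hab
          rw [← hi, zpow_apply_eq_self_of_apply_eq_self (by simpa using ha)]
        rw [dif_neg ha, dif_neg hb]
        simp [hh]
    · intro q1 q2
      refine Quotient.inductionOn₂ q1 q2 fun a b h => ?_
      simp only [Quotient.liftOn_mk] at h
      by_cases ha : a ∈ σ.support <;> by_cases hb : b ∈ σ.support
      · rw [dif_pos ha, dif_pos hb] at h
        apply Quotient.sound
        have hco : σ.cycleOf a = σ.cycleOf b := by simpa using h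
        have hmem : b ∈ (σ.cycleOf a).support := by
          rw [hco, mem_support_cycleOf_iff]
          exact ⟨Equiv.Perm.SameCycle.refl _ _, hb⟩
        exact (mem_support_cycleOf_iff.1 hmem).1
      · rw [dif_pos ha, dif_neg hb] at h; exact absurd h (by simp)
      · rw [dif_neg ha, dif_pos hb] at h; exact absurd h (by simp)
      · rw [dif_neg ha, dif_neg hb] at h
        obtain rfl : a = b := by simpa using h
        rfl
    · rintro (⟨c, hc⟩ | ⟨x, hx⟩)
      · have hcyc : c.IsCycle := (mem_cycleFactorsFinset_iff.1 hc).1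
        obtain ⟨x, hx, -⟩ := hcyc
        have hxc : x ∈ c.support := mem_support.2 hx
        have hxs : x ∈ σ.support := mem_cycleFactorsFinset_support_le hc hxc
        refine ⟨⟦x⟧, ?_⟩
        dsimp only [Quotient.liftOn_mk]
        rw [dif_pos hxs]
        simp only [Sum.inl.injEq, Subtype.mk.injEq]
        exact (cycle_is_cycleOf hxc hc).symm
      · exact ⟨⟦x⟧, by dsimp only [Quotient.liftOn_mk]; rw [dif_neg hx]⟩
  rw [ccAux, Nat.card_congr key, Nat.card_eq_fintype_card, Fintype.card_sum,
    Fintype.card_coe]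
  congr 1
  · rw [cycleType_def, Multiset.card_map]; rfl
  · simp only [Fintype.card_subtype_compl, Fintype.card_coe]

lemma ccAux_del [Fintype α] [DecidableEq α] {g : Equiv.Perm α} {a : α} (ha : g a ≠ a) :
    ccAux (Equiv.swap a (g a) * g) = ccAux g + 1 := by
  classical
  set c := g.cycleOf a with hc
  have hcmem : c ∈ g.cycleFactorsFinset := cycleOf_mem_cycleFactorsFinset_iff.2 (mem_support.2 ha)
  have hcyc : c.IsCycle := isCycle_cycleOf g ha
  set ρ := g * c⁻¹ with hρ
  have hdisj : Equiv.Perm.Disjoint ρ c := disjoint_mul_inv_of_mem_cycleFactorsFinset hcmem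
  have hgeq : g = ρ * c := by rw [hρ, inv_mul_cancel_right]
  have hcomm : Commute ρ c := hdisj.commute
  have hca : c a = g a := cycleOf_apply_self g a
  have hct : g.cycleType = ρ.cycleType + c.cycleType := by
    conv_lhs => rw [hgeq]
    exact hdisj.cycleType_mul
  have hsupp : g.support.card = ρ.support.card + c.support.card := by
    conv_lhs => rw [hgeq]
    exact hdisj.card_support_mul
  have hσ' : Equiv.swap a (g a) * g = (Equiv.swap a (c a) * c) * ρ := by
    rw [← hca, mul_assoc]
    congr 1
    rw [hgeq]
    exact hcomm.eq
  have hsle : g.support.card ≤ Fintype.card α := Finset.card_le_univ _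
  have hcane : c a ≠ a := by rw [hca]; exact ha
  by_cases h2 : c (c a) = a
  · have hcs : c = Equiv.swap a (c a) := hcyc.eq_swap_of_apply_apply_eq_self hcane h2
    have : Equiv.swap a (g a) * g = ρ := by
      rw [hσ', ← hcs]
      conv_lhs => rw [hcs]
      rw [Equiv.swap_mul_self, one_mul]
    rw [this, ccAux_eq, ccAux_eq, hct, hsupp]
    have hc2 : c.support.card = 2 := by
      rw [hcs]; exact Equiv.Perm.card_support_swap (Ne.symm hcane)
    have hctc : Multiset.card c.cycleType = 1 := by
      rw [hcyc.cycleType]; simp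
    simp only [Multiset.card_add, hctc, hc2]
    omega
  · have hcc : (Equiv.swap a (c a) * c).IsCycle := hcyc.swap_mul hcane h2
    have hsupp' : (Equiv.swap a (c a) * c).support = c.support \ {a} :=
      Equiv.Perm.support_swap_mul_eq c a h2
    have hdisj' : Equiv.Perm.Disjoint (Equiv.swap a (c a) * c) ρ := by
      rw [Equiv.Perm.disjoint_iff_disjoint_support, hsupp']
      exact Finset.disjoint_of_subset_left (Finset.sdiff_subset)
        (Equiv.Perm.disjoint_iff_disjoint_support.1 hdisj.symm)
    have hac : a ∈ c.support := mem_support.2 hcane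
    have hc2 : 2 ≤ c.support.card := hcyc.two_le_card_support
    rw [hσ', ccAux_eq, ccAux_eq, hdisj'.cycleType_mul, hdisj'.card_support_mul, hct, hsupp, hsupp',
      Finset.card_sdiff_of_subset (Finset.singleton_subset_iff.2 hac), Finset.card_singleton]
    have hctc : Multiset.card c.cycleType = 1 := by rw [hcyc.cycleType]; simp
    have hctc' : Multiset.card (Equiv.swap a (c a) * c).cycleType = 1 := by
      rw [hcc.cycleType]; simp
    simp only [Multiset.card_add, hctc, hctc']
    omega

lemma ccAux_ins [Fintype α] [DecidableEq α] {g : Equiv.Perm α} {a b : α} (ha : g a = a)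
    (hab : a ≠ b) : ccAux (Equiv.swap a b * g) + 1 = ccAux g := by
  classical
  set τ := Equiv.swap a b * g with hτ
  have hτa : τ a = b := by rw [hτ]; simp [ha]
  have h1 : Equiv.swap a (τ a) * τ = g := by
    rw [hτa, hτ, ← mul_assoc, Equiv.swap_mul_self, one_mul]
  have := ccAux_del (g := τ) (a := a) (by rw [hτa]; exact Ne.symm hab)
  rw [h1] at this
  omega

def finSuccNeZero (n : ℕ) : Fin n ≃ {x : Fin (n + 1) // x ≠ 0} where
  toFun x := ⟨x.succ, Fin.succ_ne_zero x⟩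
  invFun y := y.1.pred y.2
  left_inv x := by simp
  right_inv y := by simp

lemma decomposeFin_zero (n : ℕ) (e : Equiv.Perm (Fin n)) :
    Equiv.Perm.decomposeFin.symm (0, e) = e.extendDomain (finSuccNeZero n) := by
  refine Equiv.ext fun x => ?_
  refine Fin.cases ?_ (fun y => ?_) x
  · rw [Equiv.Perm.decomposeFin_symm_apply_zero,
      Equiv.Perm.extendDomain_apply_not_subtype _ _ (by simp)]
  · rw [Equiv.Perm.decomposeFin_symm_apply_succ,
      Equiv.Perm.extendDomain_apply_subtype e (finSuccNeZero n) (Fin.succ_ne_zero y)]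
    simp [finSuccNeZero]

lemma ccAux_decomposeFin_zero (n : ℕ) (e : Equiv.Perm (Fin n)) :
    ccAux (Equiv.Perm.decomposeFin.symm (0, e)) = ccAux e + 1 := by
  classical
  rw [decomposeFin_zero, ccAux_eq, ccAux_eq, Equiv.Perm.cycleType_extendDomain,
    Equiv.Perm.card_support_extend_domain]
  have := Finset.card_le_univ e.support
  simp only [Fintype.card_fin, Finset.card_univ, Fintype.card_fin] at *
  omega

lemma decomposeFin_swap (n : ℕ) (p : Fin (n + 1)) (e : Equiv.Perm (Fin n)) :
    Equiv.Perm.decomposeFin.symm (p, e) =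
      Equiv.swap 0 p * Equiv.Perm.decomposeFin.symm (0, e) := by
  refine Equiv.ext fun x => ?_
  refine Fin.cases ?_ (fun y => ?_) x <;>
    simp [Equiv.Perm.decomposeFin_symm_apply_zero, Equiv.Perm.decomposeFin_symm_apply_succ,
      Equiv.Perm.mul_apply]

lemma ccAux_decomposeFin (n : ℕ) (p : Fin (n + 1)) (e : Equiv.Perm (Fin n)) :
    ccAux (Equiv.Perm.decomposeFin.symm (p, e)) = ccAux e + (if p = 0 then 1 else 0) := by
  by_cases hp : p = 0
  · subst hp; rw [ccAux_decomposeFin_zero]; simp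
  · rw [decomposeFin_swap, if_neg hp]
    have h0 : (Equiv.Perm.decomposeFin.symm (0, e)) 0 = 0 :=
      Equiv.Perm.decomposeFin_symm_apply_zero 0 e
    have := ccAux_ins h0 (Ne.symm hp)
    rw [ccAux_decomposeFin_zero] at this
    omega

lemma card_cc (n c : ℕ) :
    Nat.card {σ : Equiv.Perm (Fin n) // ccAux σ = c} = stirling1 n c := by
  classical
  induction n generalizing c with
  | zero =>
    have hcc : ∀ σ : Equiv.Perm (Fin 0), ccAux σ = 0 := fun σ => by
      have : IsEmpty (Quotient (Equiv.Perm.SameCycle.setoid σ)) :=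
        ⟨fun q => Quotient.inductionOn q fun x => x.elim0⟩
      simp [ccAux, Nat.card_of_isEmpty]
    cases c with
    | zero =>
      rw [Nat.card_congr (Equiv.subtypeUnivEquiv hcc)]
      simp [Nat.card_eq_fintype_card, stirling1]
    | succ c =>
      have : IsEmpty {σ : Equiv.Perm (Fin 0) // ccAux σ = c + 1} :=
        ⟨fun ⟨σ, hσ⟩ => by simp [hcc] at hσ⟩
      simp [Nat.card_of_isEmpty, stirling1]
  | succ n ih =>
    cases c with
    | zero =>
      have : IsEmpty {σ : Equiv.Perm (Fin (n + 1)) // ccAux σ = 0} := by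
        refine ⟨fun ⟨σ, hσ⟩ => ?_⟩
        have h1 : Nonempty (Quotient (Equiv.Perm.SameCycle.setoid σ)) := ⟨⟦0⟧⟩
        have h2 : 0 < ccAux σ := Nat.card_pos
        omega
      simp [Nat.card_of_isEmpty, stirling1]
    | succ c =>
      have e1 : {σ : Equiv.Perm (Fin (n + 1)) // ccAux σ = c + 1} ≃
          {pe : Fin (n + 1) × Equiv.Perm (Fin n) //
            ccAux pe.2 + (if pe.1 = 0 then 1 else 0) = c + 1} := by
        refine Equiv.trans (Equiv.subtypeEquiv Equiv.Perm.decomposeFin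
          (q := fun pe => ccAux (Equiv.Perm.decomposeFin.symm pe) = c + 1)
          (fun σ => by simp)) (Equiv.subtypeEquivRight fun pe => ?_)
        obtain ⟨p, e⟩ := pe
        rw [ccAux_decomposeFin]
      have e2 := (Equiv.subtypeProdEquivSigmaSubtype
        (fun (p : Fin (n + 1)) (e : Equiv.Perm (Fin n)) =>
          ccAux e + (if p = 0 then 1 else 0) = c + 1))
      rw [Nat.card_congr (e1.trans e2), Nat.card_eq_fintype_card, Fintype.card_sigma]
      have hterm : ∀ p : Fin (n + 1),
          Fintype.card {e : Equiv.Perm (Fin n) // ccAux e + (if p = 0 then 1 else 0) = c + 1} =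
            if p = 0 then stirling1 n c else stirling1 n (c + 1) := by
        intro p
        by_cases hp : p = 0
        · subst hp
          rw [if_pos rfl, ← ih c, Nat.card_eq_fintype_card]
          exact Fintype.card_congr (Equiv.subtypeEquivRight
            (q := fun e => ccAux e = c) fun e => by show _ ↔ ccAux e = c; omega)
        · have hcongr : Fintype.card
              {e : Equiv.Perm (Fin n) // ccAux e + (if p = 0 then 1 else 0) = c + 1} =
              Fintype.card {e : Equiv.Perm (Fin n) // ccAux e = c + 1} :=
            Fintype.card_congr (Equiv.subtypeEquivRight
              (q := fun e => ccAux e = c + 1) fun e => by rw [if_neg hp]; omega)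
          rw [hcongr, if_neg hp, ← ih (c + 1), Nat.card_eq_fintype_card]
      rw [Finset.sum_congr rfl fun p _ => hterm p]
      have hst : stirling1 (n + 1) (c + 1) = stirling1 n c + n * stirling1 n (c + 1) := rfl
      rw [hst, Fin.sum_univ_succ]
      simp [Fin.succ_ne_zero]

lemma ff_two_mul_le [Fintype α] [DecidableEq α] (σ : Equiv.Perm α) (hff : ∀ x, σ x ≠ x) :
    2 * ccAux σ ≤ Fintype.card α := by
  classical
  have hsup : σ.support = Finset.univ := by ext x; simp [Equiv.Perm.mem_support, hff x]
  rw [ccAux_eq, hsup]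
  simp only [Finset.card_univ, Nat.sub_self, add_zero]
  have h1 : Multiset.card σ.cycleType • 2 ≤ σ.cycleType.sum :=
    Multiset.card_nsmul_le_sum fun x hx => Equiv.Perm.two_le_of_mem_cycleType hx
  rw [Equiv.Perm.sum_cycleType, hsup, Finset.card_univ, smul_eq_mul] at h1
  omega

lemma stirling1Assoc_eq_zero {m j : ℕ} (hj : m < 2 * j) : stirling1Assoc m j = 0 := by
  have : IsEmpty {σ : Equiv.Perm (Fin m) // cycleCount σ = j ∧ ∀ x, σ x ≠ x} := by
    refine ⟨fun ⟨σ, hcc, hff⟩ => ?_⟩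
    have h2 := ff_two_mul_le σ hff
    have hcc' : ccAux σ = j := hcc
    rw [hcc', Fintype.card_fin] at h2
    omega
  rw [stirling1Assoc, Nat.card_of_isEmpty]

lemma card_ff_congr (e : α ≃ β) (P : ℕ → Prop) :
    Nat.card {σ : Equiv.Perm α // P (ccAux σ) ∧ ∀ x, σ x ≠ x} =
      Nat.card {σ : Equiv.Perm β // P (ccAux σ) ∧ ∀ x, σ x ≠ x} := by
  refine Nat.card_congr (Equiv.subtypeEquiv e.permCongr fun σ => ?_)
  rw [ccAux_permCongr]
  have hff : (∀ x, σ x ≠ x) ↔ (∀ y, e.permCongr σ y ≠ y) := by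
    constructor
    · intro h y hy
      exact h (e.symm y) (by simpa [Equiv.permCongr_apply] using congrArg e.symm hy)
    · intro h x hx
      exact h (e x) (by simp [Equiv.permCongr_apply, hx])
  exact and_congr Iff.rfl hff

set_option maxHeartbeats 1000000 in
lemma fiber_card [Fintype α] [DecidableEq α] (s : Finset α) (N : ℕ) :
    Nat.card {σ : Equiv.Perm α // ccAux σ = N ∧ σ.support = s} =
      Nat.card {τ : Equiv.Perm {x // x ∈ s} //
        ccAux τ + (Fintype.card α - s.card) = N ∧ ∀ x, τ x ≠ x} := by
  classical
  have huniv : (Finset.univ : Finset {x // x ∈ s}).map (Function.Embedding.subtype _) = s := by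
    ext x; simp
  have hofsub : ∀ τ : Equiv.Perm {x // x ∈ s}, (∀ x, τ x ≠ x) →
      (Equiv.Perm.ofSubtype τ).support = s ∧
        ccAux (Equiv.Perm.ofSubtype τ) = ccAux τ + (Fintype.card α - s.card) := by
    intro τ hff
    have hsupτ : τ.support = Finset.univ := by
      ext x; simp [Equiv.Perm.mem_support, hff x]
    have hsup : (Equiv.Perm.ofSubtype τ).support = s := by
      ext x
      rw [Equiv.Perm.mem_support]
      constructor
      · intro hx
        by_contra hxs
        exact hx (Equiv.Perm.ofSubtype_apply_of_not_mem τ hxs)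
      · intro hxs
        rw [Equiv.Perm.ofSubtype_apply_of_mem τ hxs]
        intro hEq
        exact hff ⟨x, hxs⟩ (Subtype.ext hEq)
    refine ⟨hsup, ?_⟩
    have h1 : ccAux (Equiv.Perm.ofSubtype τ) =
        Multiset.card τ.cycleType + (Fintype.card α - s.card) := by
      rw [ccAux_eq, Equiv.Perm.cycleType_ofSubtype, hsup]
    have h2 : ccAux τ = Multiset.card τ.cycleType := by
      rw [ccAux_eq, hsupτ, Finset.card_univ, Nat.sub_self, add_zero]
    rw [h1, h2]
  refine (Nat.card_congr (Equiv.symm ?_))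
  refine Equiv.trans (Equiv.subtypeEquiv (Equiv.Perm.subtypeEquivSubtypePerm (fun x => x ∈ s))
    (q := fun f => ccAux f.1 = N ∧ (f.1).support = s) fun τ => ?_)
    (Equiv.subtypeSubtypeEquivSubtype (q := fun f => ccAux f = N ∧ f.support = s)
      fun {f} hf a ha => Equiv.Perm.notMem_support.1 (by rw [hf.2]; exact ha))
  have hcoe : ((Equiv.Perm.subtypeEquivSubtypePerm (fun x => x ∈ s)) τ).1
      = Equiv.Perm.ofSubtype τ := rfl
  simp only [hcoe]
  constructor
  · rintro ⟨hcc, hff⟩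
    obtain ⟨h1, h2⟩ := hofsub τ hff
    exact ⟨by rw [h2, hcc], h1⟩
  · rintro ⟨hcc, hsup⟩
    have hff : ∀ x, τ x ≠ x := by
      intro x hx
      have hfix : Equiv.Perm.ofSubtype τ (x : α) = (x : α) := by
        rw [Equiv.Perm.ofSubtype_apply_coe, hx]
      have hns : (x : α) ∉ (Equiv.Perm.ofSubtype τ).support := by
        simp [Equiv.Perm.mem_support, hfix]
      rw [hsup] at hns
      exact hns x.2
    obtain ⟨h1, h2⟩ := hofsub τ hff
    rw [h2] at hcc
    exact ⟨hcc, hff⟩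

/-- For `n ≥ k + 1`, `c(n, n-k) = ∑_{j=0}^{k} c≥2(k+j, j) · C(n, k+j)`. -/
theorem stirling1_eq_sum_stirling1Assoc (n k : ℕ) (h : k + 1 ≤ n) :
    stirling1 n (n - k) =
      ∑ j ∈ Finset.range (k + 1), stirling1Assoc (k + j) j * n.choose (k + j) := by
  classical
  rw [← card_cc n (n - k)]
  set g : ℕ → ℕ := fun m =>
    Nat.card {τ : Equiv.Perm (Fin m) // ccAux τ + (n - m) = n - k ∧ ∀ x, τ x ≠ x} with hg
  have step1 : Nat.card {σ : Equiv.Perm (Fin n) // ccAux σ = n - k} =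
      ∑ s : Finset (Fin n), g s.card := by
    have e1 := (Equiv.sigmaFiberEquiv
      (fun σp : {σ : Equiv.Perm (Fin n) // ccAux σ = n - k} => σp.1.support)).symm
    rw [Nat.card_congr e1, Nat.card_eq_fintype_card, Fintype.card_sigma]
    refine Finset.sum_congr rfl fun s _ => ?_
    have e2 : {σp : {σ : Equiv.Perm (Fin n) // ccAux σ = n - k} // σp.1.support = s} ≃
        {σ : Equiv.Perm (Fin n) // ccAux σ = n - k ∧ σ.support = s} :=
      Equiv.subtypeSubtypeEquivSubtypeInter
        (fun σ : Equiv.Perm (Fin n) => ccAux σ = n - k) (fun σ => σ.support = s)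
    rw [← Nat.card_eq_fintype_card, Nat.card_congr e2, fiber_card s (n - k)]
    simp only [Fintype.card_fin, hg]
    exact card_ff_congr (s.equivFin) (fun c => c + (n - s.card) = n - k)
  rw [step1]
  have step2 : ∑ s : Finset (Fin n), g s.card =
      ∑ m ∈ Finset.range (n + 1), n.choose m * g m := by
    calc ∑ s : Finset (Fin n), g s.card
        = ∑ s ∈ Finset.powerset (Finset.univ : Finset (Fin n)), g s.card := by
          rw [Finset.powerset_univ]
      _ = ∑ j ∈ Finset.range ((Finset.univ : Finset (Fin n)).card + 1),
            ∑ t ∈ Finset.powersetCard j Finset.univ, g t.card := Finset.sum_powerset _ _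
      _ = ∑ m ∈ Finset.range (n + 1), n.choose m * g m := by
          rw [Finset.card_univ, Fintype.card_fin]
          refine Finset.sum_congr rfl fun m _ => ?_
          rw [Finset.sum_powersetCard, Finset.card_univ, Fintype.card_fin, smul_eq_mul]
  rw [step2]
  have hgz : ∀ m, m < k → g m = 0 := by
    intro m hm
    have : IsEmpty {τ : Equiv.Perm (Fin m) // ccAux τ + (n - m) = n - k ∧ ∀ x, τ x ≠ x} :=
      ⟨fun ⟨τ, hcc, _⟩ => by omega⟩
    simp only [hg]
    exact Nat.card_of_isEmpty
  have hgs : ∀ m, k ≤ m → m ≤ n → g m = stirling1Assoc m (m - k) := by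
    intro m h1 h2
    simp only [hg, stirling1Assoc]
    refine Nat.card_congr (Equiv.subtypeEquivRight fun τ => ?_)
    have hcceq : cycleCount τ = ccAux τ := rfl
    rw [hcceq]
    constructor
    · rintro ⟨hcc, hffτ⟩; exact ⟨by omega, hffτ⟩
    · rintro ⟨hcc, hffτ⟩; exact ⟨by omega, hffτ⟩
  have hsub : Finset.Ico k (n + 1) ⊆ Finset.range (n + 1) := by
    intro x hx
    rw [Finset.mem_Ico] at hx
    rw [Finset.mem_range]
    omega
  rw [← Finset.sum_subset hsub (fun m hm hnm => by
    rw [Finset.mem_range] at hm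
    rw [Finset.mem_Ico] at hnm
    rw [hgz m (by omega), mul_zero])]
  rw [Finset.sum_Ico_eq_sum_range]
  have hterm : ∀ j ∈ Finset.range (n + 1 - k),
      n.choose (k + j) * g (k + j) = stirling1Assoc (k + j) j * n.choose (k + j) := by
    intro j hj
    rw [Finset.mem_range] at hj
    rw [hgs (k + j) (by omega) (by omega)]
    have hkj : k + j - k = j := by omega
    rw [hkj, Nat.mul_comm]
  rw [Finset.sum_congr rfl hterm]
  set T : ℕ → ℕ := fun j => stirling1Assoc (k + j) j * n.choose (k + j) with hT
  have hT1 : ∀ j, k < j → T j = 0 := by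
    intro j hj
    simp only [hT]
    rw [stirling1Assoc_eq_zero (by omega), zero_mul]
  have hT2 : ∀ j, n < k + j → T j = 0 := by
    intro j hj
    simp only [hT]
    rw [Nat.choose_eq_zero_of_lt hj, mul_zero]
  have hsub1 : Finset.range (n + 1 - k) ⊆ Finset.range (max (n + 1 - k) (k + 1)) :=
    Finset.range_subset_range.2 (le_max_left _ _)
  have hsub2 : Finset.range (k + 1) ⊆ Finset.range (max (n + 1 - k) (k + 1)) :=
    Finset.range_subset_range.2 (le_max_right _ _)
  rw [Finset.sum_subset hsub1 (fun j hj hnj => by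
    rw [Finset.mem_range] at hnj
    exact hT2 j (by omega)),
    ← Finset.sum_subset hsub2 (fun j hj hnj => by
    rw [Finset.mem_range] at hnj
    exact hT1 j (by omega))]
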